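/- arXiv:1002.3129 — 2 statements merged into one kernel-verified Lean document; each statement's English description precedes it below -/
import Mathlib

section
/- Let A be a hyperplane arrangement in ℂⁿ. Then there exists a finite open cover U of ℂⁿ by convex sets, each of which is small with respect to A, such that U is closed under taking nonempty intersections (i.e., the intersection of any two members of U is either empty or again a member of U). -/
open Set Pointwise

/-- An affine complex hyperplane in `ℂⁿ`: a level set of a nonzero linear functional. -/
def IsAffineHyperplane {n : ℕ} (H : Set (Fin n → ℂ)) : Prop :=
  ∃ (f : (Fin n → ℂ) →ₗ[ℂ] ℂ) (c : ℂ), f ≠ 0 ∧ H = {x | f x = c}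

/-- A hyperplane arrangement in `ℂⁿ`: a finite set of affine hyperplanes. -/
def IsArrangement {n : ℕ} (A : Set (Set (Fin n → ℂ))) : Prop :=
  A.Finite ∧ ∀ H ∈ A, IsAffineHyperplane H

/-- The intersection poset `L(B)`: all nonempty intersections of nonempty subfamilies of `B`. -/
def interPoset {n : ℕ} (B : Set (Set (Fin n → ℂ))) : Set (Set (Fin n → ℂ)) :=
  {G | G.Nonempty ∧ ∃ S, S ⊆ B ∧ S.Nonempty ∧ G = ⋂₀ S}

/-- The complex dimension of a subset of `ℂⁿ` (the dimension of its affine span). -/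
noncomputable def adim {n : ℕ} (G : Set (Fin n → ℂ)) : ℕ :=
  Module.finrank ℂ (affineSpan ℂ G).direction

/-- `G` is an inclusion-minimal element of the intersection poset of `B`. -/
def IsMinimalSubspace {n : ℕ} (B : Set (Set (Fin n → ℂ))) (G : Set (Fin n → ℂ)) : Prop :=
  G ∈ interPoset B ∧ ∀ G' ∈ interPoset B, G' ⊆ G → G' = G

/-- The arrangement `B`, inside an ambient space of dimension `d`, has rank `l`:
minimal elements of the intersection poset exist and each has codimension `l`;
the empty arrangement has rank `0`. -/
def HasRankIn {n : ℕ} (d : ℕ) (B : Set (Set (Fin n → ℂ))) (l : ℕ) : Prop :=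
  (B.Nonempty → (∃ G, IsMinimalSubspace B G) ∧ ∀ G, IsMinimalSubspace B G → adim G + l = d) ∧
  (B = ∅ → l = 0)

/-- The arrangement `A` in `ℂⁿ` has rank `l`. -/
abbrev HasRank {n : ℕ} (A : Set (Set (Fin n → ℂ))) (l : ℕ) : Prop := HasRankIn n A l

/-- `L̄(A) = L(A) ∪ {ℂⁿ}`. -/
def interPosetBar {n : ℕ} (A : Set (Set (Fin n → ℂ))) : Set (Set (Fin n → ℂ)) :=
  insert Set.univ (interPoset A)

/-- An open convex subset `U` of `ℂⁿ` is small with respect to `A` if the family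
`{G ∈ L̄(A) : G ∩ U ≠ ∅}` has a unique minimum (i.e. a least element) under inclusion. -/
def IsSmall {n : ℕ} (A : Set (Set (Fin n → ℂ))) (U : Set (Fin n → ℂ)) : Prop :=
  ∃ G₀ : Set (Fin n → ℂ), IsLeast {G | G ∈ interPosetBar A ∧ (G ∩ U).Nonempty} G₀

/- Auxiliary machinery. -/
def myCond (a b : ℝ) : Prop := (0 < a → 0 < b) ∧ (a < 0 → b < 0)


/-- sign-compatibility condition. -/

lemma myCond_self (a : ℝ) : myCond a a := ⟨id, id⟩

lemma myCond_zero {a : ℝ} (h : myCond a 0) : a = 0 := by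
  rcases lt_trichotomy a 0 with h' | h' | h'
  · exact absurd (h.2 h') (lt_irrefl 0)
  · exact h'
  · exact absurd (h.1 h') (lt_irrefl 0)

def myU {E : Type*} [AddCommGroup E] [Module ℝ E] {ι : Type*} (L : ι → E →ₗ[ℝ] ℝ) (k : ι → ℝ) (x : E) : Set E :=
  {y | ∀ i, myCond (L i x - k i) (L i y - k i)}

lemma mem_myU {E ι : Type*} [AddCommGroup E] [Module ℝ E] {L : ι → E →ₗ[ℝ] ℝ} {k : ι → ℝ} {x y : E} :
    y ∈ myU L k x ↔ ∀ i, myCond (L i x - k i) (L i y - k i) := Iff.rfl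

lemma self_mem_myU {E ι : Type*} [AddCommGroup E] [Module ℝ E] (L : ι → E →ₗ[ℝ] ℝ) (k : ι → ℝ) (x : E) :
    x ∈ myU L k x := fun i => myCond_self _

lemma myU_finite {E ι : Type*} [AddCommGroup E] [Module ℝ E] [Finite ι] (L : ι → E →ₗ[ℝ] ℝ) (k : ι → ℝ) :
    (Set.range (myU L k)).Finite := by
  classical
  set W : (ι → Bool × Bool) → Set E := fun v =>
    {y | ∀ i, ((v i).1 = true → 0 < L i y - k i) ∧ ((v i).2 = true → L i y - k i < 0)} with hW
  have key : ∀ x, myU L k x = W (fun i => (decide (0 < L i x - k i), decide (L i x - k i < 0))) := by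
    intro x
    ext y
    simp [myU, myCond, hW, decide_eq_true_eq]
  have hsub : Set.range (myU L k) ⊆ Set.range W := by
    rintro _ ⟨x, rfl⟩
    exact ⟨_, (key x).symm⟩
  exact (Set.finite_range W).subset hsub

lemma myU_isOpen {E ι : Type*} [TopologicalSpace E] [AddCommGroup E] [Module ℝ E] [Finite ι]
    (L : ι → E →ₗ[ℝ] ℝ) (k : ι → ℝ) (hL : ∀ i, Continuous (L i)) (x : E) :
    IsOpen (myU L k x) := by
  have hrw : myU L k x = ⋂ i, {y | myCond (L i x - k i) (L i y - k i)} := by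
    ext y; simp [myU, Set.mem_iInter]
  rw [hrw]
  refine isOpen_iInter_of_finite fun i => ?_
  rcases lt_trichotomy (L i x - k i) 0 with ha | ha | ha
  · have h1 : ¬ (0:ℝ) < L i x - k i := asymm ha
    have : {y | myCond (L i x - k i) (L i y - k i)} = {y : E | L i y < k i} := by
      ext y; simp [myCond, ha, h1, sub_neg]
    rw [this]; exact isOpen_lt (hL i) continuous_const
  · have : {y | myCond (L i x - k i) (L i y - k i)} = Set.univ := by
      ext y; simp [myCond, ha]
    rw [this]; exact isOpen_univ
  · have h1 : ¬ (L i x - k i) < 0 := asymm ha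
    have : {y | myCond (L i x - k i) (L i y - k i)} = {y : E | k i < L i y} := by
      ext y; simp [myCond, ha, h1, sub_pos]
    rw [this]; exact isOpen_lt continuous_const (hL i)

lemma myU_convex {E ι : Type*} [AddCommGroup E] [Module ℝ E]
    (L : ι → E →ₗ[ℝ] ℝ) (k : ι → ℝ) (x : E) :
    Convex ℝ (myU L k x) := by
  have hrw : myU L k x = ⋂ i, {y | myCond (L i x - k i) (L i y - k i)} := by
    ext y; simp [myU, Set.mem_iInter]
  rw [hrw]
  refine convex_iInter fun i => ?_
  rcases lt_trichotomy (L i x - k i) 0 with ha | ha | ha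
  · have h1 : ¬ (0:ℝ) < L i x - k i := asymm ha
    have : {y | myCond (L i x - k i) (L i y - k i)} = {y : E | L i y < k i} := by
      ext y; simp [myCond, ha, h1, sub_neg]
    rw [this]; exact convex_halfSpace_lt (LinearMap.isLinear (L i)) (k i)
  · have : {y | myCond (L i x - k i) (L i y - k i)} = Set.univ := by
      ext y; simp [myCond, ha]
    rw [this]; exact convex_univ
  · have h1 : ¬ (L i x - k i) < 0 := asymm ha
    have : {y | myCond (L i x - k i) (L i y - k i)} = {y : E | k i < L i y} := by
      ext y; simp [myCond, ha, h1, sub_pos]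
    rw [this]; exact convex_halfSpace_gt (LinearMap.isLinear (L i)) (k i)

lemma key_scalar (a b cz t : ℝ) (ht : 0 < t)
    (h1 : 0 < a → 0 < a + t * (b - a)) (h2 : a < 0 → a + t * (b - a) < 0)
    (hza : myCond a cz) (hzb : myCond b cz) (w : ℝ) :
    myCond (a + t * (b - a)) w ↔ myCond a w ∧ myCond b w := by
  obtain ⟨hza1, hza2⟩ := hza
  obtain ⟨hzb1, hzb2⟩ := hzb
  unfold myCond
  rcases lt_trichotomy a 0 with ha | ha | ha
  · have hap : a + t * (b - a) < 0 := h2 ha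
    have hcz : cz < 0 := hza2 ha
    constructor
    · rintro ⟨k1, k2⟩
      refine ⟨⟨fun h => absurd h (by linarith), fun _ => k2 hap⟩,
        ⟨fun hb => absurd (hzb1 hb) (by linarith), fun _ => k2 hap⟩⟩
    · rintro ⟨⟨_, k2⟩, _⟩
      exact ⟨fun h => absurd h (by linarith), fun _ => k2 ha⟩
  · subst ha
    have he : (0:ℝ) + t * (b - 0) = t * b := by ring
    rw [he]
    have hpos : 0 < t * b ↔ 0 < b := by
      constructor <;> intro h <;> nlinarith
    have hneg : t * b < 0 ↔ b < 0 := by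
      constructor <;> intro h <;> nlinarith
    constructor
    · rintro ⟨k1, k2⟩
      exact ⟨⟨fun h => absurd h (lt_irrefl 0), fun h => absurd h (lt_irrefl 0)⟩,
        ⟨fun h => k1 (hpos.2 h), fun h => k2 (hneg.2 h)⟩⟩
    · rintro ⟨_, k1, k2⟩
      exact ⟨fun h => k1 (hpos.1 h), fun h => k2 (hneg.1 h)⟩
  · have hap : 0 < a + t * (b - a) := h1 ha
    have hcz : 0 < cz := hza1 ha
    constructor
    · rintro ⟨k1, k2⟩
      exact ⟨⟨fun _ => k1 hap, fun h => absurd h (by linarith)⟩,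
        ⟨fun _ => k1 hap, fun hb => absurd (hzb2 hb) (by linarith)⟩⟩
    · rintro ⟨⟨k1, _⟩, _⟩
      exact ⟨fun _ => k1 ha, fun h => absurd h (by linarith)⟩

lemma eventually_sign (a b : ℝ) :
    ∀ᶠ t in nhdsWithin (0:ℝ) (Set.Ioi 0),
      (0 < a → 0 < a + t * (b - a)) ∧ (a < 0 → a + t * (b - a) < 0) := by
  have hc : Filter.Tendsto (fun t : ℝ => a + t * (b - a)) (nhdsWithin 0 (Set.Ioi 0)) (nhds a) := by
    have h0 : Filter.Tendsto (fun t : ℝ => a + t * (b - a)) (nhds 0) (nhds (a + 0 * (b - a))) :=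
      (continuous_const.add (continuous_id.mul continuous_const)).tendsto 0
    simpa using h0.mono_left nhdsWithin_le_nhds
  rcases lt_trichotomy a 0 with ha | ha | ha
  · have h0 : ∀ᶠ v in nhds a, v < 0 := IsOpen.eventually_mem isOpen_Iio ha
    filter_upwards [hc.eventually h0] with t ht
    exact ⟨fun h => absurd h (by linarith), fun _ => ht⟩
  · subst ha
    exact Filter.Eventually.of_forall fun t =>
      ⟨fun h => absurd h (lt_irrefl 0), fun h => absurd h (lt_irrefl 0)⟩
  · have h0 : ∀ᶠ v in nhds a, 0 < v := IsOpen.eventually_mem isOpen_Ioi ha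
    filter_upwards [hc.eventually h0] with t ht
    exact ⟨fun _ => ht, fun h => absurd h (by linarith)⟩

lemma myU_inter {E ι : Type*} [AddCommGroup E] [Module ℝ E] [Finite ι]
    (L : ι → E →ₗ[ℝ] ℝ) (k : ι → ℝ) {x y z : E}
    (hzx : z ∈ myU L k x) (hzy : z ∈ myU L k y) :
    ∃ p, myU L k x ∩ myU L k y = myU L k p := by
  obtain ⟨t, htP, htpos⟩ :=
    ((Filter.eventually_all.2 fun i : ι =>
        eventually_sign (L i x - k i) (L i y - k i)).and self_mem_nhdsWithin).exists
  replace htpos : 0 < t := htpos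
  refine ⟨x + t • (y - x), ?_⟩
  have hL : ∀ i : ι, L i (x + t • (y - x)) - k i =
      (L i x - k i) + t * ((L i y - k i) - (L i x - k i)) := by
    intro i
    simp only [map_add, map_smul, map_sub, smul_eq_mul]
    ring
  ext w
  simp only [Set.mem_inter_iff, mem_myU]
  constructor
  · rintro ⟨hwx, hwy⟩ i
    rw [hL i]
    exact (key_scalar _ _ _ t htpos (htP i).1 (htP i).2 (hzx i) (hzy i) _).2 ⟨hwx i, hwy i⟩
  · intro hw
    have h : ∀ i, myCond (L i x - k i) (L i w - k i) ∧ myCond (L i y - k i) (L i w - k i) := by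
      intro i
      have := hw i
      rw [hL i] at this
      exact (key_scalar _ _ _ t htpos (htP i).1 (htP i).2 (hzx i) (hzy i) _).1 this
    exact ⟨fun i => (h i).1, fun i => (h i).2⟩

/-- `ℂⁿ` admits a finite open cover by convex sets, each small with respect to `A`, which is
closed under nonempty intersections. -/
theorem exists_finite_small_convex_cover {n : ℕ} (A : Set (Set (Fin n → ℂ)))
    (hA : IsArrangement A) :
    ∃ 𝒰 : Set (Set (Fin n → ℂ)),
      𝒰.Finite ∧
      ⋃₀ 𝒰 = Set.univ ∧
      (∀ U ∈ 𝒰, IsOpen U ∧ Convex ℝ U ∧ IsSmall A U) ∧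
      (∀ U ∈ 𝒰, ∀ V ∈ 𝒰, (U ∩ V).Nonempty → U ∩ V ∈ 𝒰) := by
  classical
  obtain ⟨hAfin, hAhyp⟩ := hA
  haveI : Finite ↥A := hAfin.to_subtype
  choose f c hf0 hfc using fun H : ↥A => hAhyp H H.2
  set L : (↥A ⊕ ↥A) → (Fin n → ℂ) →ₗ[ℝ] ℝ :=
    Sum.elim (fun H : ↥A => Complex.reLm.comp ((f H).restrictScalars ℝ))
      (fun H : ↥A => Complex.imLm.comp ((f H).restrictScalars ℝ)) with hLdef
  set k : (↥A ⊕ ↥A) → ℝ :=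
    Sum.elim (fun H : ↥A => (c H).re) (fun H : ↥A => (c H).im) with hkdef
  have hmem : ∀ (H : ↥A) (y : Fin n → ℂ),
      y ∈ (H : Set (Fin n → ℂ)) ↔
        (L (Sum.inl H) y = k (Sum.inl H) ∧ L (Sum.inr H) y = k (Sum.inr H)) := by
    intro H y
    have h1 : y ∈ (H : Set (Fin n → ℂ)) ↔ f H y = c H := by
      conv_lhs => rw [hfc H]
      exact Iff.rfl
    rw [h1, Complex.ext_iff]
    exact Iff.rfl
  refine ⟨Set.range (myU L k), myU_finite L k, ?_, ?_, ?_⟩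
  · refine Set.eq_univ_iff_forall.2 fun x => ?_
    exact Set.mem_sUnion.2 ⟨myU L k x, Set.mem_range_self x, self_mem_myU L k x⟩
  · rintro _ ⟨x, rfl⟩
    refine ⟨myU_isOpen L k (fun i => (L i).continuous_of_finiteDimensional) x,
      myU_convex L k x, ?_⟩
    -- smallness
    -- key: if some G = ⋂₀ S in interPoset meets myU L k x, then every H' ∈ S contains x
    have hkey : ∀ (S : Set (Set (Fin n → ℂ))), S ⊆ A → ∀ y ∈ ⋂₀ S, y ∈ myU L k x →
        ∀ H' ∈ S, x ∈ H' := by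
      intro S hSA y hyG hyU H' hH'S
      set Hs : ↥A := ⟨H', hSA hH'S⟩
      have hyH' : y ∈ H' := hyG H' hH'S
      have hy := (hmem Hs y).1 hyH'
      have e1 : L (Sum.inl Hs) y - k (Sum.inl Hs) = 0 := by rw [hy.1]; ring
      have e2 : L (Sum.inr Hs) y - k (Sum.inr Hs) = 0 := by rw [hy.2]; ring
      have c1 := hyU (Sum.inl Hs)
      have c2 := hyU (Sum.inr Hs)
      rw [e1] at c1
      rw [e2] at c2
      have d1 : L (Sum.inl Hs) x = k (Sum.inl Hs) := by
        have := myCond_zero c1; linarith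
      have d2 : L (Sum.inr Hs) x = k (Sum.inr Hs) := by
        have := myCond_zero c2; linarith
      exact (hmem Hs x).2 ⟨d1, d2⟩
    by_cases hx : ∃ H : ↥A, x ∈ (H : Set (Fin n → ℂ))
    · obtain ⟨H₀, hxH₀⟩ := hx
      set Z : Set (Set (Fin n → ℂ)) := {H' | H' ∈ A ∧ x ∈ H'} with hZdef
      have hZA : Z ⊆ A := fun H' h => h.1
      have hZne : Z.Nonempty := ⟨H₀, H₀.2, hxH₀⟩
      have hxZ : x ∈ ⋂₀ Z := Set.mem_sInter.2 fun H' h => h.2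
      refine ⟨⋂₀ Z, ⟨⟨Set.mem_insert_iff.2 (Or.inr ⟨⟨x, hxZ⟩, Z, hZA, hZne, rfl⟩),
        ⟨x, hxZ, self_mem_myU L k x⟩⟩, ?_⟩⟩
      rintro G ⟨hGbar, y, hyG, hyU⟩
      rcases Set.mem_insert_iff.1 hGbar with rfl | hGposet
      · exact Set.subset_univ _
      · obtain ⟨hGne, S, hSA, hSne, rfl⟩ := hGposet
        refine Set.sInter_subset_sInter fun H' hH'S => ?_
        exact ⟨hSA hH'S, hkey S hSA y hyG hyU H' hH'S⟩
    · refine ⟨Set.univ, ⟨⟨Set.mem_insert _ _, ⟨x, Set.mem_univ x, self_mem_myU L k x⟩⟩, ?_⟩⟩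
      rintro G ⟨hGbar, y, hyG, hyU⟩
      rcases Set.mem_insert_iff.1 hGbar with rfl | hGposet
      · exact le_refl _
      · obtain ⟨hGne, S, hSA, hSne, rfl⟩ := hGposet
        obtain ⟨H', hH'S⟩ := hSne
        exact absurd ⟨⟨H', hSA hH'S⟩, hkey S hSA y hyG hyU H' hH'S⟩ hx
  · rintro _ ⟨x, rfl⟩ _ ⟨y, rfl⟩ ⟨z, hzx, hzy⟩
    obtain ⟨p, hp⟩ := myU_inter L k hzx hzy
    rw [hp]
    exact Set.mem_range_self p
end

section
/- Let A be a hyperplane arrangement in ℂⁿ and let U be a nonempty open convex subset of ℂⁿ that is small with respect to A, with G = Min(U). Then the set U ∖ Σ(A) is homotopy equivalent to M(A_G) = ℂⁿ ∖ Σ(A_G), the complement of the central arrangement A_G of hyperplanes of A containing G. -/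
open Set Pointwise

/-- If `U` is a nonempty small open convex set with `G = Min(U)`, then `U ∖ Σ(A)` is homotopy
equivalent to the complement `M(A_G)` of the central arrangement `A_G` of hyperplanes of `A`
containing `G`. -/
theorem small_set_complement_homotopyEquiv {n : ℕ} (A : Set (Set (Fin n → ℂ)))
    (hA : IsArrangement A) (U : Set (Fin n → ℂ)) (hUne : U.Nonempty)
    (hUopen : IsOpen U) (hUconv : Convex ℝ U) (G : Set (Fin n → ℂ))
    (hG : IsLeast {G' | G' ∈ interPosetBar A ∧ (G' ∩ U).Nonempty} G) :
    Nonempty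
      (ContinuousMap.HomotopyEquiv (↥(U \ ⋃₀ A : Set (Fin n → ℂ)))
        (↥((⋃₀ {H | H ∈ A ∧ G ⊆ H})ᶜ : Set (Fin n → ℂ)))) := by
    classical
  set B : Set (Set (Fin n → ℂ)) := {H | H ∈ A ∧ G ⊆ H} with hB
  -- a point of G ∩ U
  obtain ⟨p, hpG, hpU⟩ := hG.1.2
  -- hyperplanes of A are nonempty
  have hne : ∀ H ∈ A, H.Nonempty := by
    intro H hH
    obtain ⟨f, c, hf, rfl⟩ := hA.2 H hH
    obtain ⟨y, hy⟩ : ∃ y, f y ≠ 0 := by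
      by_contra h
      push_neg at h
      exact hf (LinearMap.ext fun y => by simp [h y])
    exact ⟨(c / f y) • y, by simp [div_mul_cancel₀ c hy]⟩
  -- every hyperplane of A that meets U contains G
  have hmeet : ∀ H ∈ A, (H ∩ U).Nonempty → G ⊆ H := by
    intro H hH hHU
    exact hG.2 ⟨Or.inr ⟨hne H hH, {H}, singleton_subset_iff.2 hH, singleton_nonempty H,
      (sInter_singleton H).symm⟩, hHU⟩
  -- U \ Σ(A) = U ∩ (Σ(B))ᶜ
  have hEq : (U \ ⋃₀ A : Set (Fin n → ℂ)) = U ∩ (⋃₀ B)ᶜ := by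
    ext x
    simp only [mem_diff, mem_inter_iff, mem_compl_iff, mem_sUnion, not_exists, not_and]
    constructor
    · rintro ⟨hxU, hx⟩
      exact ⟨hxU, fun H hHB => hx H hHB.1⟩
    · rintro ⟨hxU, hx⟩
      refine ⟨hxU, fun H hH hxH => hx H ⟨hH, hmeet H hH ⟨x, hxH, hxU⟩⟩ hxH⟩
  -- every hyperplane of B contains p
  have hpB : ∀ H ∈ B, p ∈ H := fun H hH => hH.2 hpG
  -- the translated set V and its gauge
  set V : Set (Fin n → ℂ) := (fun y => p + y) ⁻¹' U with hV
  have hVconv : Convex ℝ V := hUconv.translate_preimage_right p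
  have hVopen : IsOpen V := hUopen.preimage (continuous_const.add continuous_id)
  have h0V : (0 : Fin n → ℂ) ∈ V := by simpa [hV] using hpU
  have hVmem : ∀ x : Fin n → ℂ, x ∈ U ↔ gauge V (x - p) < 1 := by
    intro x
    have h1 : x ∈ U ↔ x - p ∈ V := by simp [hV]
    rw [h1, gauge_lt_one_iff_mem_interior hVconv (hVopen.mem_nhds h0V), hVopen.interior_eq]
  have hgcont : Continuous (gauge V) :=
    continuous_gauge hVconv (hVopen.mem_nhds h0V)
  have hgnn : ∀ y : Fin n → ℂ, 0 ≤ gauge V y := fun y => gauge_nonneg y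
  -- real scalars acting via complex coercion
  have hcoe : ∀ (r : ℝ) (y : Fin n → ℂ), ((r : ℂ)) • y = r • y := by
    intro r y
    funext i
    simp [Complex.real_smul]
  -- the deformation map
  set φ : ℝ → (Fin n → ℂ) → (Fin n → ℂ) :=
    fun t x => p + (((1 + t * gauge V (x - p))⁻¹ : ℝ) : ℂ) • (x - p) with hφ
  have hden : ∀ t : ℝ, 0 ≤ t → ∀ x : Fin n → ℂ, 0 < 1 + t * gauge V (x - p) := by
    intro t ht x
    have := mul_nonneg ht (hgnn (x - p))
    linarith
  -- scaling about p preserves each hyperplane of B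
  have hHmem : ∀ H ∈ B, ∀ (s : ℝ), 0 < s → ∀ x : Fin n → ℂ,
      (p + ((s : ℂ)) • (x - p) ∈ H ↔ x ∈ H) := by
    intro H hHB s hs x
    obtain ⟨f, c, hf, hHf⟩ := hA.2 H hHB.1
    have hpc : f p = c := by
      have := hpB H hHB
      rw [hHf] at this
      exact this
    have hsne : ((s : ℂ)) ≠ 0 := by
      simp [Complex.ofReal_ne_zero, ne_of_gt hs]
    rw [hHf]
    simp only [mem_setOf_eq, map_add, map_smul, map_sub, hpc, smul_eq_mul]
    constructor
    · intro h
      have h2 : (s : ℂ) * (f x - c) = 0 := by linear_combination h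
      rcases mul_eq_zero.1 h2 with h' | h'
      · exact absurd h' hsne
      · linear_combination h'
    · intro h
      rw [h]
      ring
  -- membership facts for φ
  have hφM : ∀ (t : ℝ), 0 ≤ t → ∀ x : Fin n → ℂ, x ∉ ⋃₀ B → φ t x ∉ ⋃₀ B := by
    intro t ht x hx hmem
    obtain ⟨H, hHB, hxH⟩ := hmem
    have hs : 0 < (1 + t * gauge V (x - p))⁻¹ := inv_pos.2 (hden t ht x)
    exact hx ⟨H, hHB, (hHmem H hHB _ hs x).1 hxH⟩
  have hφgauge : ∀ (t : ℝ), 0 ≤ t → ∀ x : Fin n → ℂ,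
      gauge V (φ t x - p) = (1 + t * gauge V (x - p))⁻¹ * gauge V (x - p) := by
    intro t ht x
    have hs : (0:ℝ) ≤ (1 + t * gauge V (x - p))⁻¹ := (inv_pos.2 (hden t ht x)).le
    rw [hφ]
    simp only [add_sub_cancel_left]
    rw [hcoe, gauge_smul_of_nonneg hs, smul_eq_mul]
  have hφU : ∀ (t : ℝ), 0 ≤ t → ∀ x : Fin n → ℂ, x ∈ U → φ t x ∈ U := by
    intro t ht x hx
    rw [hVmem] at hx ⊢
    rw [hφgauge t ht x]
    have hd := hden t ht x
    rw [inv_mul_lt_iff₀ hd, mul_one]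
    nlinarith [hgnn (x - p), mul_nonneg ht (hgnn (x - p))]
  have hφ1U : ∀ x : Fin n → ℂ, φ 1 x ∈ U := by
    intro x
    rw [hVmem, hφgauge 1 zero_le_one x]
    have hd := hden 1 zero_le_one x
    rw [inv_mul_lt_iff₀ hd, mul_one]
    nlinarith [hgnn (x - p)]
  have hφ0 : ∀ x : Fin n → ℂ, φ 0 x = x := by
    intro x
    rw [hφ]
    simp
  -- continuity of φ on I × (subspaces of ℂⁿ)
  have hφcont : ∀ (X : Type) (_ : TopologicalSpace X) (g : X → (Fin n → ℂ)), Continuous g →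
      Continuous (fun q : unitInterval × X => φ (q.1 : ℝ) (g q.2)) := by
    intro X _ g hg
    rw [hφ]
    have h1 : Continuous fun q : unitInterval × X => gauge V (g q.2 - p) :=
      hgcont.comp ((hg.comp continuous_snd).sub continuous_const)
    have h2 : Continuous fun q : unitInterval × X =>
        ((1 : ℝ) + (q.1 : ℝ) * gauge V (g q.2 - p)) :=
      continuous_const.add ((continuous_subtype_val.comp continuous_fst).mul h1)
    have h3 : Continuous fun q : unitInterval × X =>
        ((1 : ℝ) + (q.1 : ℝ) * gauge V (g q.2 - p))⁻¹ :=
      h2.inv₀ fun q => ne_of_gt (hden (q.1 : ℝ) q.1.2.1 (g q.2))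
    exact continuous_const.add
      ((Complex.continuous_ofReal.comp h3).smul ((hg.comp continuous_snd).sub continuous_const))
  -- the two spaces
  set M : Set (Fin n → ℂ) := (⋃₀ B)ᶜ with hM
  set S : Set (Fin n → ℂ) := U ∩ M with hS
  -- retraction and inclusion
  have hr : ∀ x : M, φ 1 (x : Fin n → ℂ) ∈ S :=
    fun x => ⟨hφ1U x, hφM 1 zero_le_one x x.2⟩
  let rmap : C(M, S) :=
    ⟨fun x => ⟨φ 1 (x : Fin n → ℂ), hr x⟩, by
      refine Continuous.subtype_mk ?_ _
      have h0 := hφcont M inferInstance (fun x : M => (x : Fin n → ℂ)) continuous_subtype_val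
      have h1 : Continuous fun x : M => ((1 : unitInterval), x) :=
        continuous_const.prodMk continuous_id
      exact h0.comp h1⟩
  let imap : C(S, M) :=
    ⟨fun x => ⟨(x : Fin n → ℂ), x.2.2⟩, Continuous.subtype_mk continuous_subtype_val _⟩
  -- homotopies
  have hMmem : ∀ (t : unitInterval) (x : M), φ (t : ℝ) (x : Fin n → ℂ) ∈ M :=
    fun t x => hφM (t : ℝ) t.2.1 x x.2
  have hSmem : ∀ (t : unitInterval) (x : S), φ (t : ℝ) (x : Fin n → ℂ) ∈ S :=
    fun t x => ⟨hφU (t : ℝ) t.2.1 x x.2.1, hφM (t : ℝ) t.2.1 x x.2.2⟩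
  have homM : (imap.comp rmap).Homotopic (ContinuousMap.id M) := by
    refine ContinuousMap.Homotopic.symm ⟨?_⟩
    exact
      { toFun := fun q => ⟨φ (q.1 : ℝ) (q.2 : Fin n → ℂ), hMmem q.1 q.2⟩
        continuous_toFun := Continuous.subtype_mk
          (hφcont M inferInstance (fun x : M => (x : Fin n → ℂ)) continuous_subtype_val) _
        map_zero_left := fun x => by
          apply Subtype.ext
          simp [hφ0]
        map_one_left := fun x => by
          apply Subtype.ext
          simp [imap, rmap] }
  have homS : (rmap.comp imap).Homotopic (ContinuousMap.id S) := by
    refine ContinuousMap.Homotopic.symm ⟨?_⟩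
    exact
      { toFun := fun q => ⟨φ (q.1 : ℝ) (q.2 : Fin n → ℂ), hSmem q.1 q.2⟩
        continuous_toFun := Continuous.subtype_mk
          (hφcont S inferInstance (fun x : S => (x : Fin n → ℂ)) continuous_subtype_val) _
        map_zero_left := fun x => by
          apply Subtype.ext
          simp [hφ0]
        map_one_left := fun x => by
          apply Subtype.ext
          simp [imap, rmap] }
  exact ⟨((Homeomorph.setCongr hEq).toHomotopyEquiv).trans
    { toFun := imap, invFun := rmap, left_inv := homS, right_inv := homM }⟩
end
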